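/- arXiv:2203.00555 — 3 statements merged into one kernel-verified Lean document; each statement's English description precedes it below -/
import Mathlib

section
/- For all real numbers α > 0, x, v, w, the Euclidean norm of the gradient of (v, w) ↦ (α + v·w)·x/√(α² + v²·w²) equals |x| · α · |α − v·w| · √(v² + w²) / (α² + v²·w²)^{3/2}. -/
open Real InnerProductSpace

/-- The Euclidean norm of the gradient of the simplified scalar DeepNorm sub-layer
`f(x; v, w) = (α + v·w)·x/√(α² + v²·w²)` with respect to the parameter vector `θ = (v, w)`
equals `|x|·α·|α − v·w|·√(v² + w²)/(α² + v²·w²)^{3/2}`. -/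
theorem deepnorm_sublayer_param_grad_norm
    (α x v w : ℝ) (hα : 0 < α) :
    ‖gradient
        (fun θ : EuclideanSpace ℝ (Fin 2) =>
          (α + θ 0 * θ 1) * x / Real.sqrt (α ^ 2 + (θ 0) ^ 2 * (θ 1) ^ 2))
        ((WithLp.equiv 2 (Fin 2 → ℝ)).symm ![v, w])‖ =
      |x| * α * |α - v * w| * Real.sqrt (v ^ 2 + w ^ 2) /
        (α ^ 2 + v ^ 2 * w ^ 2) ^ ((3 : ℝ) / 2) := by
  set t₀ : ℝ := v * w with ht₀
  set s : ℝ := Real.sqrt (α ^ 2 + t₀ ^ 2) with hsdef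
  have hpos : 0 < α ^ 2 + t₀ ^ 2 := by positivity
  have hs : 0 < s := Real.sqrt_pos.mpr hpos
  have hs2 : s ^ 2 = α ^ 2 + t₀ ^ 2 := Real.sq_sqrt hpos.le
  set D : ℝ := x * α * (α - t₀) / s ^ 3 with hD
  set pt : EuclideanSpace ℝ (Fin 2) := (WithLp.equiv 2 (Fin 2 → ℝ)).symm ![v, w] with hpt
  have hpt0 : pt 0 = v := rfl
  have hpt1 : pt 1 = w := rfl
  -- derivative of h
  have hh : HasDerivAt (fun t : ℝ => (α + t) * x / Real.sqrt (α ^ 2 + t ^ 2)) D t₀ := by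
    have hnum : HasDerivAt (fun t : ℝ => (α + t) * x) (1 * x) t₀ :=
      ((hasDerivAt_id t₀).const_add α).mul_const x
    have hin : HasDerivAt (fun t : ℝ => α ^ 2 + t ^ 2) ((2 : ℕ) * t₀ ^ (2 - 1)) t₀ :=
      (hasDerivAt_pow 2 t₀).const_add (α ^ 2)
    have hden : HasDerivAt (fun t : ℝ => Real.sqrt (α ^ 2 + t ^ 2))
        (((2 : ℕ) * t₀ ^ (2 - 1)) / (2 * s)) t₀ := hin.sqrt (by positivity)
    have := hnum.div hden hs.ne'
    refine this.congr_deriv ?_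
    symm
    rw [hD]
    field_simp
    rw [← hsdef]
    linear_combination (-2 * x * s ^ 2) * hs2
  -- fderiv of p
  have hp : HasFDerivAt (fun θ : EuclideanSpace ℝ (Fin 2) => θ 0 * θ 1)
      (pt 0 • (EuclideanSpace.proj (1 : Fin 2) : EuclideanSpace ℝ (Fin 2) →L[ℝ] ℝ)
        + pt 1 • (EuclideanSpace.proj (0 : Fin 2) : EuclideanSpace ℝ (Fin 2) →L[ℝ] ℝ)) pt := by
    exact ((EuclideanSpace.proj (0 : Fin 2) :
        EuclideanSpace ℝ (Fin 2) →L[ℝ] ℝ).hasFDerivAt (x := pt)).mul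
      ((EuclideanSpace.proj (1 : Fin 2) :
        EuclideanSpace ℝ (Fin 2) →L[ℝ] ℝ).hasFDerivAt (x := pt))
  have hcomp : HasFDerivAt
      (fun θ : EuclideanSpace ℝ (Fin 2) => (α + θ 0 * θ 1) * x / Real.sqrt (α ^ 2 + (θ 0 * θ 1) ^ 2))
      (D • (pt 0 • (EuclideanSpace.proj (1 : Fin 2) : EuclideanSpace ℝ (Fin 2) →L[ℝ] ℝ)
        + pt 1 • (EuclideanSpace.proj (0 : Fin 2) : EuclideanSpace ℝ (Fin 2) →L[ℝ] ℝ))) pt :=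
    by have := (hh : HasDerivAt _ D (pt 0 * pt 1)).comp_hasFDerivAt pt hp; exact this
  set g : EuclideanSpace ℝ (Fin 2) := (WithLp.equiv 2 (Fin 2 → ℝ)).symm ![D * w, D * v] with hg
  have hgrad : HasGradientAt
      (fun θ : EuclideanSpace ℝ (Fin 2) =>
        (α + θ 0 * θ 1) * x / Real.sqrt (α ^ 2 + (θ 0) ^ 2 * (θ 1) ^ 2)) g pt := by
    rw [hasGradientAt_iff_hasFDerivAt]
    have hfun : (fun θ : EuclideanSpace ℝ (Fin 2) =>
        (α + θ 0 * θ 1) * x / Real.sqrt (α ^ 2 + (θ 0) ^ 2 * (θ 1) ^ 2))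
        = (fun θ : EuclideanSpace ℝ (Fin 2) =>
        (α + θ 0 * θ 1) * x / Real.sqrt (α ^ 2 + (θ 0 * θ 1) ^ 2)) := by
      funext θ; rw [mul_pow]
    rw [hfun]
    refine hcomp.congr_fderiv ?_
    symm
    apply ContinuousLinearMap.ext
    intro θ
    simp [InnerProductSpace.toDual_apply_apply, PiLp.inner_apply, Fin.sum_univ_two, hpt0, hpt1,
      PiLp.proj_apply, g, Matrix.cons_val_zero, Matrix.cons_val_one]
    ring
  rw [hgrad.gradient]
  have hnorm : ‖g‖ = Real.sqrt ((D * w) ^ 2 + (D * v) ^ 2) := by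
    rw [EuclideanSpace.norm_eq]
    congr 1
    simp [Fin.sum_univ_two, g, sq_abs]
  rw [hnorm]
  have h1 : Real.sqrt ((D * w) ^ 2 + (D * v) ^ 2) = |D| * Real.sqrt (v ^ 2 + w ^ 2) := by
    rw [show (D * w) ^ 2 + (D * v) ^ 2 = D ^ 2 * (v ^ 2 + w ^ 2) by ring,
      Real.sqrt_mul (sq_nonneg D), Real.sqrt_sq_eq_abs]
  rw [h1, hD]
  have hrpow : (α ^ 2 + v ^ 2 * w ^ 2) ^ ((3 : ℝ) / 2) = s ^ 3 := by
    have hA : α ^ 2 + v ^ 2 * w ^ 2 = α ^ 2 + t₀ ^ 2 := by rw [ht₀]; ring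
    rw [hA]
    calc (α ^ 2 + t₀ ^ 2) ^ ((3 : ℝ) / 2)
        = ((α ^ 2 + t₀ ^ 2) ^ ((1 : ℝ) / 2)) ^ (3 : ℕ) := by
          rw [← Real.rpow_natCast ((α ^ 2 + t₀ ^ 2) ^ ((1 : ℝ) / 2)) 3,
            ← Real.rpow_mul hpos.le]
          norm_num
      _ = s ^ 3 := by rw [← Real.sqrt_eq_rpow, hsdef]
  rw [hrpow, abs_div, abs_mul, abs_mul, abs_of_pos hα, abs_of_pos (pow_pos hs 3), ht₀]
  ring
end

section
/- For all real numbers α > 0, x, v, w with 0 < v, 0 < w and v·w ≤ α, the Euclidean norm of the gradient of (v, w) ↦ (α + v·w)·x/√(α² + v²·w²) is at most |x| · √(v² + w²)/α, i.e. at most |x| · ‖θ‖/α where θ = (v, w). (This is the bound ‖∂F/∂θ‖ ≲ ‖θ‖/α for the parameters of the last sub-layer used in the derivation of DeepNorm's constants.) -/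
set_option maxHeartbeats 1000000

/-- For `0 < v, w` and `v·w ≤ α`, the Euclidean norm of the gradient of the simplified
scalar DeepNorm sub-layer `f(x; v, w) = (α + v·w)·x/√(α² + v²·w²)` with respect to the
parameter vector `θ = (v, w)` is at most `|x|·‖θ‖/α = |x|·√(v² + w²)/α`. -/
theorem deepnorm_sublayer_param_grad_norm_le
    (α x v w : ℝ) (hα : 0 < α) (hv : 0 < v) (hw : 0 < w) (hvw : v * w ≤ α) :
    ‖gradient
        (fun θ : EuclideanSpace ℝ (Fin 2) =>
          (α + θ 0 * θ 1) * x / Real.sqrt (α ^ 2 + (θ 0) ^ 2 * (θ 1) ^ 2))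
        ((WithLp.equiv 2 (Fin 2 → ℝ)).symm ![v, w])‖ ≤
      |x| * Real.sqrt (v ^ 2 + w ^ 2) / α := by
  have hq : (0:ℝ) < α ^ 2 + (v * w) ^ 2 := by positivity
  obtain ⟨s, hsdef⟩ : ∃ s, Real.sqrt (α ^ 2 + (v * w) ^ 2) = s := ⟨_, rfl⟩
  have hs : 0 < s := hsdef ▸ Real.sqrt_pos.2 hq
  have hs2 : s ^ 2 = α ^ 2 + (v * w) ^ 2 := hsdef ▸ Real.sq_sqrt hq.le
  have hφ : HasDerivAt (fun p : ℝ => (α + p) * x / Real.sqrt (α ^ 2 + p ^ 2))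
      (x * α * (α - v * w) / s ^ 3) (v * w) := by
    have h1 : HasDerivAt (fun p : ℝ => (α + p) * x) (1 * x) (v * w) :=
      ((hasDerivAt_id (v * w)).const_add α).mul_const x
    have h2 : HasDerivAt (fun p : ℝ => Real.sqrt (α ^ 2 + p ^ 2))
        ((2 * (v * w) ^ 1) / (2 * s)) (v * w) := by
      have := ((hasDerivAt_pow 2 (v * w)).const_add (α ^ 2)).sqrt hq.ne'
      rwa [hsdef] at this
    have h3 := h1.div h2 (hsdef ▸ hs.ne')
    rw [hsdef] at h3
    refine h3.congr_deriv ?_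
    field_simp
    linear_combination x * hs2
  set c : ℝ := x * α * (α - v * w) / s ^ 3 with hcdef
  set a : EuclideanSpace ℝ (Fin 2) := (WithLp.equiv 2 (Fin 2 → ℝ)).symm ![v, w] with hadef
  have ha0 : a 0 = v := rfl
  have ha1 : a 1 = w := rfl
  set P : Fin 2 → (EuclideanSpace ℝ (Fin 2) →L[ℝ] ℝ) :=
    fun i => PiLp.proj (𝕜 := ℝ) 2 (fun _ : Fin 2 => ℝ) i with hPdef
  have hu : HasFDerivAt (fun θ : EuclideanSpace ℝ (Fin 2) => θ 0 * θ 1)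
      (a 0 • P 1 + a 1 • P 0) a :=
    ((P 0).hasFDerivAt (x := a)).mul ((P 1).hasFDerivAt (x := a))
  have hF : HasFDerivAt
      (fun θ : EuclideanSpace ℝ (Fin 2) =>
        (α + θ 0 * θ 1) * x / Real.sqrt (α ^ 2 + (θ 0) ^ 2 * (θ 1) ^ 2))
      (c • (a 0 • P 1 + a 1 • P 0)) a := by
    have h4 := hφ.comp_hasFDerivAt_of_eq a hu (by rw [ha0, ha1])
    have hfun : (fun θ : EuclideanSpace ℝ (Fin 2) =>
        (α + θ 0 * θ 1) * x / Real.sqrt (α ^ 2 + (θ 0) ^ 2 * (θ 1) ^ 2)) =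
        (fun p : ℝ => (α + p) * x / Real.sqrt (α ^ 2 + p ^ 2)) ∘
          (fun θ : EuclideanSpace ℝ (Fin 2) => θ 0 * θ 1) := by
      funext θ
      simp [Function.comp, mul_pow]
    rw [hfun]
    exact h4
  have hgradeq : gradient
      (fun θ : EuclideanSpace ℝ (Fin 2) =>
        (α + θ 0 * θ 1) * x / Real.sqrt (α ^ 2 + (θ 0) ^ 2 * (θ 1) ^ 2)) a
      = (InnerProductSpace.toDual ℝ _).symm (c • (a 0 • P 1 + a 1 • P 0)) := by
    rw [gradient, hF.fderiv]
  rw [hgradeq, LinearIsometryEquiv.norm_map]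
  have hsα : α ≤ s := by nlinarith
  have hc : |c| ≤ |x| / α := by
    have hcc : c = x * (α * (α - v * w) / s ^ 3) := by rw [hcdef]; ring
    have hkey : α * (α - v * w) / s ^ 3 ≤ 1 / α := by
      rw [div_le_div_iff₀ (by positivity) hα]
      nlinarith [pow_le_pow_left₀ hα.le hsα 3, mul_pos hv hw]
    rw [hcc, abs_mul, abs_of_nonneg (show (0:ℝ) ≤ α * (α - v * w) / s ^ 3 by
      have : 0 ≤ α - v * w := by linarith
      positivity)]
    calc |x| * (α * (α - v * w) / s ^ 3) ≤ |x| * (1 / α) :=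
          mul_le_mul_of_nonneg_left hkey (abs_nonneg x)
      _ = |x| / α := by ring
  refine ContinuousLinearMap.opNorm_le_bound _ (by positivity) fun h => ?_
  have hnorm : ‖h‖ = Real.sqrt ((h 0) ^ 2 + (h 1) ^ 2) := by
    rw [EuclideanSpace.norm_eq, Fin.sum_univ_two, Real.norm_eq_abs, Real.norm_eq_abs,
      sq_abs, sq_abs]
  have happ : (c • (a 0 • P 1 + a 1 • P 0)) h = c * (v * h 1 + w * h 0) := by
    simp [ha0, ha1, hPdef, mul_add]
  rw [happ, Real.norm_eq_abs, abs_mul]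
  have hCS : |v * h 1 + w * h 0| ≤ Real.sqrt (v ^ 2 + w ^ 2) * ‖h‖ := by
    rw [hnorm, ← Real.sqrt_mul (by positivity), ← Real.sqrt_sq_eq_abs]
    apply Real.sqrt_le_sqrt
    nlinarith [sq_nonneg (v * h 0 - w * h 1)]
  calc |c| * |v * h 1 + w * h 0| ≤ (|x| / α) * (Real.sqrt (v ^ 2 + w ^ 2) * ‖h‖) := by
        apply mul_le_mul hc hCS (abs_nonneg _) (by positivity)
    _ = |x| * Real.sqrt (v ^ 2 + w ^ 2) / α * ‖h‖ := by ring
end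

section
/- Let α ≥ 1 be real and let v, w, v*, w* ∈ (0, 1]. Then for every real x, |(α + v*·w*)·x/√(α² + v*²·w*²) − (α + v·w)·x/√(α² + v²·w²)| ≤ (√2·|x|/α) · √((v* − v)² + (w* − w)²). (Exact one-sub-layer version of the model-update bound of Theorem 1: the change of a sub-layer's output caused by updating its parameters θ = (v, w) to θ* = (v*, w*) is at most (√2·|x|/α)·‖θ* − θ‖.) -/
set_option maxHeartbeats 1000000 in
lemma deepnorm_key (α p p' : ℝ) (hα : 1 ≤ α) (hp : 0 < p) (hp1 : p ≤ 1)
    (hp' : 0 < p') (hp1' : p' ≤ 1) :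
    |(α + p') / Real.sqrt (α ^ 2 + p' ^ 2) - (α + p) / Real.sqrt (α ^ 2 + p ^ 2)| ≤
      |p' - p| / α := by
  have hα0 : (0:ℝ) < α := lt_of_lt_of_le one_pos hα
  set s := Real.sqrt (α ^ 2 + p ^ 2) with hsdef
  set s' := Real.sqrt (α ^ 2 + p' ^ 2) with hs'def
  have hs2 : s ^ 2 = α ^ 2 + p ^ 2 := Real.sq_sqrt (by positivity)
  have hs'2 : s' ^ 2 = α ^ 2 + p' ^ 2 := Real.sq_sqrt (by positivity)
  have hsge : α ≤ s := by
    rw [hsdef]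
    calc α = Real.sqrt (α ^ 2) := (Real.sqrt_sq hα0.le).symm
    _ ≤ Real.sqrt (α ^ 2 + p ^ 2) := Real.sqrt_le_sqrt (by nlinarith)
  have hs'ge : α ≤ s' := by
    rw [hs'def]
    calc α = Real.sqrt (α ^ 2) := (Real.sqrt_sq hα0.le).symm
    _ ≤ Real.sqrt (α ^ 2 + p' ^ 2) := Real.sqrt_le_sqrt (by nlinarith)
  have hs0 : 0 < s := lt_of_lt_of_le hα0 hsge
  have hs'0 : 0 < s' := lt_of_lt_of_le hα0 hs'ge
  set N := (α + p') * s - (α + p) * s' with hNdef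
  set D := (α + p') * s + (α + p) * s' with hDdef
  have hD0 : 0 < D := by positivity
  have hDge : 2 * α ^ 2 ≤ D := by nlinarith
  have hN : N * D = 2 * α * (p' - p) * (α ^ 2 - p * p') := by
    rw [hNdef, hDdef]
    linear_combination (α + p') ^ 2 * hs2 - (α + p) ^ 2 * hs'2
  have hND : |N| * D = |2 * α * (p' - p) * (α ^ 2 - p * p')| := by
    rw [← abs_of_nonneg hD0.le, ← abs_mul, hN]
  have h2 : |2 * α * (p' - p) * (α ^ 2 - p * p')| ≤ 2 * α ^ 3 * |p' - p| := by
    calc |2 * α * (p' - p) * (α ^ 2 - p * p')|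
        = (2 * α * (α ^ 2 - p * p')) * |p' - p| := by
          rw [show 2 * α * (p' - p) * (α ^ 2 - p * p')
              = (2 * α * (α ^ 2 - p * p')) * (p' - p) by ring, abs_mul,
            abs_of_nonneg (by nlinarith [mul_le_one₀ hp1' hp.le hp1, mul_pos hp hp'])]
      _ ≤ 2 * α ^ 3 * |p' - p| := by
          nlinarith [mul_nonneg (mul_nonneg (mul_pos hp hp').le hα0.le) (abs_nonneg (p' - p))]
  have hNbound : |N| ≤ α * |p' - p| := by
    have hgap : 0 ≤ D - 2 * α ^ 2 := by linarith
    nlinarith [hND, h2, hDge, abs_nonneg N, abs_nonneg (p' - p),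
      mul_nonneg (abs_nonneg N) hgap, mul_pos hα0 hα0]
  have hdiff : (α + p') / s' - (α + p) / s = N / (s * s') := by
    rw [hNdef]; field_simp
  rw [hdiff, abs_div, abs_of_pos (mul_pos hs0 hs'0),
    div_le_div_iff₀ (mul_pos hs0 hs'0) hα0]
  nlinarith [hNbound, abs_nonneg (p' - p), mul_le_mul hsge hs'ge hα0.le hs0.le]

lemma sum_le_sqrt2 (a b : ℝ) (ha : 0 ≤ a) (hb : 0 ≤ b) :
    a + b ≤ Real.sqrt 2 * Real.sqrt (a ^ 2 + b ^ 2) := by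
  rw [← Real.sqrt_mul (by norm_num)]
  calc a + b = Real.sqrt ((a + b) ^ 2) := (Real.sqrt_sq (by positivity)).symm
  _ ≤ Real.sqrt (2 * (a ^ 2 + b ^ 2)) := Real.sqrt_le_sqrt (by nlinarith [sq_nonneg (a - b)])

/-- Exact one-sub-layer version of the model-update bound of Theorem 1: for `α ≥ 1` and
weights `v, w, v*, w* ∈ (0, 1]`, updating the parameters `(v, w)` of a scalar DeepNorm
sub-layer to `(v*, w*)` changes the output at input `x` by at most
`(√2·|x|/α)·√((v* − v)² + (w* − w)²)`. -/
theorem deepnorm_sublayer_update_bound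
    (α v w v' w' x : ℝ) (hα : 1 ≤ α)
    (hv : v ∈ Set.Ioc (0 : ℝ) 1) (hw : w ∈ Set.Ioc (0 : ℝ) 1)
    (hv' : v' ∈ Set.Ioc (0 : ℝ) 1) (hw' : w' ∈ Set.Ioc (0 : ℝ) 1) :
    |(α + v' * w') * x / Real.sqrt (α ^ 2 + v' ^ 2 * w' ^ 2) -
        (α + v * w) * x / Real.sqrt (α ^ 2 + v ^ 2 * w ^ 2)| ≤
      Real.sqrt 2 * |x| / α * Real.sqrt ((v' - v) ^ 2 + (w' - w) ^ 2) := by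
  obtain ⟨hv0, hv1⟩ := hv
  obtain ⟨hw0, hw1⟩ := hw
  obtain ⟨hv0', hv1'⟩ := hv'
  obtain ⟨hw0', hw1'⟩ := hw'
  have hα0 : (0:ℝ) < α := lt_of_lt_of_le one_pos hα
  have hp : 0 < v * w := mul_pos hv0 hw0
  have hp1 : v * w ≤ 1 := by nlinarith
  have hp' : 0 < v' * w' := mul_pos hv0' hw0'
  have hp1' : v' * w' ≤ 1 := by nlinarith
  have key := deepnorm_key α (v * w) (v' * w') hα hp hp1 hp' hp1'
  have hrw : v ^ 2 * w ^ 2 = (v * w) ^ 2 := by ring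
  have hrw' : v' ^ 2 * w' ^ 2 = (v' * w') ^ 2 := by ring
  rw [hrw, hrw']
  have hfac : (α + v' * w') * x / Real.sqrt (α ^ 2 + (v' * w') ^ 2) -
      (α + v * w) * x / Real.sqrt (α ^ 2 + (v * w) ^ 2) =
      x * ((α + v' * w') / Real.sqrt (α ^ 2 + (v' * w') ^ 2) -
        (α + v * w) / Real.sqrt (α ^ 2 + (v * w) ^ 2)) := by ring
  rw [hfac, abs_mul]
  have step1 : |x| * |(α + v' * w') / Real.sqrt (α ^ 2 + (v' * w') ^ 2) -
      (α + v * w) / Real.sqrt (α ^ 2 + (v * w) ^ 2)| ≤ |x| * (|v' * w' - v * w| / α) :=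
    mul_le_mul_of_nonneg_left key (abs_nonneg x)
  refine step1.trans ?_
  have h3 : |v' * w' - v * w| ≤ |v' - v| + |w' - w| := by
    calc |v' * w' - v * w| = |(v' - v) * w' + v * (w' - w)| := by ring_nf
    _ ≤ |(v' - v) * w'| + |v * (w' - w)| := abs_add_le _ _
    _ ≤ |v' - v| + |w' - w| := by
        rw [abs_mul, abs_mul, abs_of_pos hw0', abs_of_pos hv0]
        nlinarith [abs_nonneg (v' - v), abs_nonneg (w' - w)]
  have h4 : |v' - v| + |w' - w| ≤
      Real.sqrt 2 * Real.sqrt ((v' - v) ^ 2 + (w' - w) ^ 2) := by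
    have := sum_le_sqrt2 |v' - v| |w' - w| (abs_nonneg _) (abs_nonneg _)
    simpa [sq_abs] using this
  have h5 : |v' * w' - v * w| ≤ Real.sqrt 2 * Real.sqrt ((v' - v) ^ 2 + (w' - w) ^ 2) :=
    h3.trans h4
  calc |x| * (|v' * w' - v * w| / α)
      ≤ |x| * ((Real.sqrt 2 * Real.sqrt ((v' - v) ^ 2 + (w' - w) ^ 2)) / α) := by
        gcongr
  _ = Real.sqrt 2 * |x| / α * Real.sqrt ((v' - v) ^ 2 + (w' - w) ^ 2) := by ring
end
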